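/- For an exterior space X, the family {W₀(E) | E ∈ ε(X)}, where W₀(E) = p₀(E) ∪ incl₀(Ě(X)), is an externology on the completion space (X ∪_{L(X)} Ě(X), 𝒢₀); in particular W₀(E₁) ∩ W₀(E₂) = W₀(E₁ ∩ E₂) for E₁, E₂ ∈ ε(X). -/

import Mathlib

open Set Topology Filter

universe u v

/-- An externology on a topological space: a nonempty family of open subsets closed under
finite intersections and under open supersets. -/
structure Externology (X : Type u) [TopologicalSpace X] where
  sets : Set (Set X)
  nonempty' : sets.Nonempty
  isOpen' : ∀ E ∈ sets, IsOpen E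
  inter' : ∀ E ∈ sets, ∀ F ∈ sets, E ∩ F ∈ sets
  superset' : ∀ E ∈ sets, ∀ U : Set X, IsOpen U → E ⊆ U → U ∈ sets

variable {X : Type u} {Y : Type v} [TopologicalSpace X] [TopologicalSpace Y]

/-- The limit space `L(X)` of an exterior space: the intersection of all exterior open sets. -/
def Elimit (ε : Externology X) : Set X := ⋂₀ ε.sets

/-- `V` is a `q₀`-saturated open subset of `E`: an open subset of `E` which is a union of
path-components of `E`. -/
def IsQSatOpen (E V : Set X) : Prop :=
  V ⊆ E ∧ IsOpen V ∧ ∀ x ∈ V, pathComponentIn E x ⊆ V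

/-- An end point of an exterior space: a compatible choice of a path-component of each
exterior open subset. -/
structure EndPt (ε : Externology X) where
  comp : Set X → Set X
  isComp' : ∀ E ∈ ε.sets, ∃ x ∈ E, comp E = pathComponentIn E x
  mono' : ∀ E ∈ ε.sets, ∀ F ∈ ε.sets, E ⊆ F → comp E ⊆ comp F

/-- The inverse limit topology on the end space. -/
instance EndPt.instTopologicalSpace (ε : Externology X) : TopologicalSpace (EndPt ε) :=
  .generateFrom {S | ∃ E ∈ ε.sets, ∃ V : Set X, IsQSatOpen E V ∧
    S = {a : EndPt ε | a.comp E ⊆ V}}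

/-- The canonical map `e₀ : L(X) → Ě(X)` sending a point of the limit space to the family
of its path-components. -/
def endOf (ε : Externology X) (x : Elimit ε) : EndPt ε where
  comp E := pathComponentIn E (x : X)
  isComp' E hE := ⟨(x : X), x.2 E hE, rfl⟩
  mono' _E _hE _F _hF h := pathComponentIn_mono h

/-- The gluing relation of the push-out `X ∪_{L(X)} Ě(X)`. -/
inductive CompletionRel (ε : Externology X) : X ⊕ EndPt ε → X ⊕ EndPt ε → Prop
  | glue (x : Elimit ε) : CompletionRel ε (Sum.inl (x : X)) (Sum.inr (endOf ε x))

/-- The underlying set of the completion: the push-out `X ∪_{L(X)} Ě(X)`. -/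
def CompletionPts (ε : Externology X) : Type u := Quot (CompletionRel ε)

/-- The canonical map `p₀ : X → X ∪_{L(X)} Ě(X)`. -/
def p0 (ε : Externology X) : X → CompletionPts ε := fun x => Quot.mk _ (Sum.inl x)

/-- The canonical map `incl₀ : Ě(X) → X ∪_{L(X)} Ě(X)`. -/
def incl0 (ε : Externology X) : EndPt ε → CompletionPts ε := fun a => Quot.mk _ (Sum.inr a)

/-- The family `𝒢₀` of subsets of the push-out `X ∪_{L(X)} Ě(X)`: `W ∈ 𝒢₀` iff `p₀⁻¹ W` is
open in `X`, `incl₀⁻¹ W` is open in `Ě(X)`, and each end `a ∈ incl₀⁻¹ W` admits `E ∈ ε(X)`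
and an open `G ⊆ π₀(E)` (encoded by the saturated open set `V = q₀⁻¹ G ⊆ E`) with
`a ∈ η₀⁻¹ G ⊆ incl₀⁻¹ W` and `q₀⁻¹ G ⊆ p₀⁻¹ W`. -/
def G0 (ε : Externology X) : Set (Set (CompletionPts ε)) :=
  {W | IsOpen (p0 ε ⁻¹' W) ∧ IsOpen {a : EndPt ε | incl0 ε a ∈ W} ∧
    ∀ a : EndPt ε, incl0 ε a ∈ W →
      ∃ E ∈ ε.sets, ∃ V : Set X, IsQSatOpen E V ∧ a.comp E ⊆ V ∧
        (∀ b : EndPt ε, b.comp E ⊆ V → incl0 ε b ∈ W) ∧ ∀ x ∈ V, p0 ε x ∈ W}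

/-- The topology `𝒢₀` on the completion. -/
instance CompletionPts.instTopologicalSpace (ε : Externology X) :
    TopologicalSpace (CompletionPts ε) := .generateFrom (G0 ε)

/-- The basic exterior subset `W₀(E) = p₀(E) ∪ incl₀(Ě(X))` of the completion. -/
def W0 (ε : Externology X) (E : Set X) : Set (CompletionPts ε) :=
  p0 ε '' E ∪ Set.range (incl0 ε)

lemma W0_mono (ε : Externology X) {E F : Set X} (h : E ⊆ F) : W0 ε E ⊆ W0 ε F :=
  union_subset_union_left _ (image_mono h)

/-- The externology of the completion `Č₀(X)`, with base `{W₀(E) | E ∈ ε(X)}`. -/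
def completionExternology (ε : Externology X) : Externology (CompletionPts ε) where
  sets := {U | IsOpen U ∧ ∃ E ∈ ε.sets, W0 ε E ⊆ U}
  nonempty' := by
    obtain ⟨E, hE⟩ := ε.nonempty'
    exact ⟨univ, isOpen_univ, E, hE, subset_univ _⟩
  isOpen' := fun U hU => hU.1
  inter' := by
    rintro U ⟨hUo, E, hE, hEU⟩ V ⟨hVo, F, hF, hFV⟩
    refine ⟨hUo.inter hVo, E ∩ F, ε.inter' E hE F hF, ?_⟩
    exact subset_inter ((W0_mono ε inter_subset_left).trans hEU)
      ((W0_mono ε inter_subset_right).trans hFV)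
  superset' := by
    rintro U ⟨hUo, E, hE, hEU⟩ V hVo hUV
    exact ⟨hVo, E, hE, hEU.trans hUV⟩

/-- An exterior map between exterior spaces. -/
def IsExteriorMap (εX : Externology X) (εY : Externology Y) (f : X → Y) : Prop :=
  Continuous f ∧ ∀ E ∈ εY.sets, f ⁻¹' E ∈ εX.sets

/-- An isomorphism of exterior spaces. -/
def IsExteriorIso (εX : Externology X) (εY : Externology Y) (f : X → Y) : Prop :=
  IsExteriorMap εX εY f ∧ ∃ g : Y → X, IsExteriorMap εY εX g ∧ g ∘ f = id ∧ f ∘ g = id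

/-- An exterior space is `Č₀`-complete if the canonical map `p₀ : X → Č₀(X)` is an
isomorphism of exterior spaces. -/
def C0Complete (ε : Externology X) : Prop :=
  IsExteriorIso ε (completionExternology ε) (p0 ε)

/-- A `π₀`-`ε(X)`-net: a net eventually contained in a single path-component of every
exterior open set. -/
def IsPi0Net {D : Type*} [Preorder D] (ε : Externology X) (u : D → X) : Prop :=
  ∀ E ∈ ε.sets, ∃ C : Set X, (∃ y ∈ E, C = pathComponentIn E y) ∧ ∀ᶠ δ in atTop, u δ ∈ C

/-- The `r`-exterior externology of a flow: open sets absorbing every positive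
semi-trajectory. -/
def rExt (φ : Flow ℝ X) : Externology X where
  sets := {N | IsOpen N ∧ ∀ x : X, ∃ r₀ : ℝ, ∀ t : ℝ, r₀ < t → φ t x ∈ N}
  nonempty' := ⟨univ, isOpen_univ, fun _ => ⟨0, fun _ _ => mem_univ _⟩⟩
  isOpen' := fun _ hN => hN.1
  inter' := by
    rintro N ⟨hNo, hN⟩ M ⟨hMo, hM⟩
    refine ⟨hNo.inter hMo, fun x => ?_⟩
    obtain ⟨r, hr⟩ := hN x
    obtain ⟨s, hs⟩ := hM x
    exact ⟨max r s, fun t ht =>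
      ⟨hr t ((le_max_left r s).trans_lt ht), hs t ((le_max_right r s).trans_lt ht)⟩⟩
  superset' := by
    rintro N ⟨_, hN⟩ U hUo hNU
    exact ⟨hUo, fun x => (hN x).imp fun r h t ht => hNU (h t ht)⟩

/-- The `ω^r`-limit set of a point for a flow. -/
def omegaR (φ : Flow ℝ X) (x : X) : Set X :=
  ⋂ t : ℝ, closure ((fun s : ℝ => φ s x) '' Ici t)

/-- The set of critical (rest) points of a flow. -/
def criticalSet (φ : Flow ℝ X) : Set X := {x | ∀ r : ℝ, φ r x = x}

/-- The set of periodic points of a flow. -/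
def periodicSet (φ : Flow ℝ X) : Set X := {x | ∃ r : ℝ, r ≠ 0 ∧ φ r x = x}

/-- The global `Ω^r`-limit of a flow. -/
def OmegaRSet (φ : Flow ℝ X) : Set X := ⋃ x : X, omegaR φ x

/-- The compatibility conditions making an exterior space with a flow an `r`-exterior flow:
`φ : ℝ^r ×̄ M_d → M` is exterior and each `F_t : M ×̄ I → M`, `F_t(x,s) = φ(ts, x)`,
is exterior. -/
structure IsRExteriorFlow (ε : Externology X) (φ : Flow ℝ X) : Prop where
  absorb : ∀ E ∈ ε.sets, ∀ x : X, ∃ r₀ : ℝ, ∀ t : ℝ, r₀ < t → φ t x ∈ E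
  homotopyExt : ∀ t : ℝ, ∀ E ∈ ε.sets, ∃ G ∈ ε.sets, ∀ x ∈ G, ∀ s ∈ Icc (0:ℝ) 1,
    φ (t * s) x ∈ E

/-- Characterization of the equivalence generated by the gluing relation. -/
lemma completionRel_eqvGen {ε : Externology X} {a b : X ⊕ EndPt ε}
    (h : Relation.EqvGen (CompletionRel ε) a b) :
    a = b ∨ ∃ x : Elimit ε, ∃ y : Elimit ε, endOf ε x = endOf ε y ∧
      (a = Sum.inl (x : X) ∨ a = Sum.inr (endOf ε x)) ∧
      (b = Sum.inl (y : X) ∨ b = Sum.inr (endOf ε y)) := by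
  induction h with
  | rel a b hab =>
    cases hab with
    | glue x => exact Or.inr ⟨x, x, rfl, Or.inl rfl, Or.inr rfl⟩
  | refl a => exact Or.inl rfl
  | symm a b _ ih =>
    rcases ih with rfl | ⟨x, y, hxy, ha, hb⟩
    · exact Or.inl rfl
    · exact Or.inr ⟨y, x, hxy.symm, hb, ha⟩
  | trans a b c _ _ ih1 ih2 =>
    rcases ih1 with rfl | ⟨x, y, hxy, ha, hb⟩
    · exact ih2
    rcases ih2 with rfl | ⟨y', z, hyz, hb', hc⟩
    · exact Or.inr ⟨x, y, hxy, ha, hb⟩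
    have hyy' : endOf ε y = endOf ε y' := by
      rcases hb with hb | hb <;> rcases hb' with hb' | hb' <;>
        rw [hb] at hb'
      · have hyy : y = y' := Subtype.ext (Sum.inl.inj hb')
        rw [hyy]
      · exact absurd hb' (by simp)
      · exact absurd hb' (by simp)
      · exact Sum.inr.inj hb'
    exact Or.inr ⟨x, z, (hxy.trans hyy').trans hyz, ha, hc⟩

/-- If `p₀ x = p₀ y` then `x = y` or both lie in the limit space. -/
lemma p0_eq_cases {ε : Externology X} {x y : X} (h : p0 ε x = p0 ε y) :
    x = y ∨ (x ∈ Elimit ε ∧ y ∈ Elimit ε) := by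
  rcases completionRel_eqvGen (Quot.eqvGen_exact h) with h' | ⟨x', y', _, hx, hy⟩
  · exact Or.inl (Sum.inl.inj h')
  · rcases hx with hx | hx
    · rcases hy with hy | hy
      · obtain rfl : x = (x' : X) := Sum.inl.inj hx
        obtain rfl : y = (y' : X) := Sum.inl.inj hy
        exact Or.inr ⟨x'.2, y'.2⟩
      · exact absurd hy (by simp)
    · exact absurd hx (by simp)

/-- If `p₀ x = incl₀ a` then `x` lies in the limit space. -/
lemma p0_eq_incl0 {ε : Externology X} {x : X} {a : EndPt ε}
    (h : p0 ε x = incl0 ε a) : x ∈ Elimit ε := by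
  rcases completionRel_eqvGen (Quot.eqvGen_exact h) with h' | ⟨x', y', _, hx, _⟩
  · exact absurd h' (by simp)
  · rcases hx with hx | hx
    · obtain rfl : x = (x' : X) := Sum.inl.inj hx
      exact x'.2
    · exact absurd hx (by simp)

/-- Every point of the completion is of the form `p₀ x` or `incl₀ a`. -/
lemma completion_cases {ε : Externology X} (z : CompletionPts ε) :
    (∃ x : X, z = p0 ε x) ∨ ∃ a : EndPt ε, z = incl0 ε a := by
  induction z using Quot.ind with
  | _ s =>
    rcases s with x | a
    · exact Or.inl ⟨x, rfl⟩
    · exact Or.inr ⟨a, rfl⟩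

lemma preimage_p0_W0 {ε : Externology X} {E : Set X} (hE : E ∈ ε.sets) :
    p0 ε ⁻¹' W0 ε E = E := by
  ext x
  constructor
  · rintro (⟨x', hx', heq⟩ | ⟨a, ha⟩)
    · rcases p0_eq_cases heq with rfl | ⟨_, hl⟩
      · exact hx'
      · exact hl E hE
    · exact p0_eq_incl0 ha.symm E hE
  · intro hx
    exact Or.inl ⟨x, hx, rfl⟩

/-- `W₀(E)` is a basic `𝒢₀`-open set. -/
lemma W0_mem_G0 (ε : Externology X) {E : Set X} (hE : E ∈ ε.sets) :
    W0 ε E ∈ G0 ε := by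
  refine ⟨?_, ?_, ?_⟩
  · rw [preimage_p0_W0 hE]
    exact ε.isOpen' E hE
  · have h : {a : EndPt ε | incl0 ε a ∈ W0 ε E} = univ :=
      eq_univ_of_forall fun a => Or.inr ⟨a, rfl⟩
    rw [h]
    exact isOpen_univ
  · intro a _
    refine ⟨E, hE, E, ⟨subset_rfl, ε.isOpen' E hE, fun x _ => pathComponentIn_subset⟩,
      ?_, fun b _ => Or.inr ⟨b, rfl⟩, fun x hx => Or.inl ⟨x, hx, rfl⟩⟩
    obtain ⟨x, _, hc⟩ := a.isComp' E hE
    rw [hc]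
    exact pathComponentIn_subset

lemma W0_isOpen (ε : Externology X) {E : Set X} (hE : E ∈ ε.sets) :
    IsOpen (W0 ε E) :=
  TopologicalSpace.GenerateOpen.basic _ (W0_mem_G0 ε hE)

lemma p0_continuous (ε : Externology X) : Continuous (p0 ε) :=
  continuous_generateFrom_iff.mpr fun _W hW => hW.1

lemma W0_inter (ε : Externology X) {E₁ E₂ : Set X} (h₁ : E₁ ∈ ε.sets)
    (h₂ : E₂ ∈ ε.sets) : W0 ε E₁ ∩ W0 ε E₂ = W0 ε (E₁ ∩ E₂) := by
  apply Subset.antisymm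
  · rintro z ⟨hz₁, hz₂⟩
    rcases hz₁ with ⟨x₁, hx₁, rfl⟩ | hr
    · rcases hz₂ with ⟨x₂, hx₂, heq⟩ | hr
      · rcases p0_eq_cases heq with rfl | ⟨hl₂, hl₁⟩
        · exact Or.inl ⟨x₂, ⟨hx₁, hx₂⟩, rfl⟩
        · exact Or.inl ⟨x₁, ⟨hx₁, hl₁ E₂ h₂⟩, rfl⟩
      · exact Or.inr hr
    · exact Or.inr hr
  · exact subset_inter (W0_mono ε inter_subset_left) (W0_mono ε inter_subset_right)

/-- the family `{W₀(E) | E ∈ ε(X)}` is an externology on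
`(X ∪_{L(X)} Ě(X), 𝒢₀)`, and `W₀(E₁) ∩ W₀(E₂) = W₀(E₁ ∩ E₂)`. -/
theorem stmt_6 (ε : Externology X) :
    (∀ E₁ ∈ ε.sets, ∀ E₂ ∈ ε.sets, W0 ε E₁ ∩ W0 ε E₂ = W0 ε (E₁ ∩ E₂)) ∧
      ∃ ext : Externology (CompletionPts ε),
        ext.sets = {W | ∃ E ∈ ε.sets, W = W0 ε E} := by
  refine ⟨fun E₁ h₁ E₂ h₂ => W0_inter ε h₁ h₂, ⟨⟨{W | ∃ E ∈ ε.sets, W = W0 ε E},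
    ?_, ?_, ?_, ?_⟩, rfl⟩⟩
  · obtain ⟨E, hE⟩ := ε.nonempty'
    exact ⟨W0 ε E, E, hE, rfl⟩
  · rintro W ⟨E, hE, rfl⟩
    exact W0_isOpen ε hE
  · rintro W₁ ⟨E₁, h₁, rfl⟩ W₂ ⟨E₂, h₂, rfl⟩
    exact ⟨E₁ ∩ E₂, ε.inter' E₁ h₁ E₂ h₂, W0_inter ε h₁ h₂⟩
  · rintro W ⟨E, hE, rfl⟩ U hU hWU
    refine ⟨p0 ε ⁻¹' U, ε.superset' E hE _ (hU.preimage (p0_continuous ε))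
      (fun x hx => hWU (Or.inl ⟨x, hx, rfl⟩)), ?_⟩
    apply Subset.antisymm
    · intro z hz
      rcases completion_cases z with ⟨x, rfl⟩ | ⟨a, rfl⟩
      · exact Or.inl ⟨x, hz, rfl⟩
      · exact Or.inr ⟨a, rfl⟩
    · rintro z (⟨x, hx, rfl⟩ | ⟨a, rfl⟩)
      · exact hx
      · exact hWU (Or.inr ⟨a, rfl⟩)
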